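/- Let q(k) = c_d(k)k^d + ⋯ + c_0(k) be a quasi-polynomial with generating function r(x) = ∑_{k≥0} q(k)x^k. If every pole of r of order at least j+1 is an n-th root of unity, then n is a period of c_j. -/

import Mathlib

open PowerSeries Polynomial

section helpers
open Complex Finset


-- periodic extension over ℤ
lemma per_int {f : ℤ → ℂ} {P : ℕ} (h : ∀ k, f (k + P) = f k) :
    ∀ (m : ℤ) (k : ℤ), f (k + m * P) = f k := by
  intro m
  induction m using Int.induction_on with
  | zero => simp
  | succ i ih => intro k
                 have : k + ((i:ℤ) + 1) * P = (k + i * P) + P := by ring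
                 rw [this, h, ih]
  | pred i ih => intro k
                 have h2 := h (k + (-(i:ℤ) - 1) * P)
                 have e : k + (-(i:ℤ) - 1) * P + P = k + (-(i:ℤ)) * P := by ring
                 rw [e] at h2
                 rw [← h2, ih]
lemma per_mod {f : ℤ → ℂ} {P : ℕ} (h : ∀ k, f (k + P) = f k) (k : ℤ) :
    f k = f (k % P) := by
  conv_lhs => rw [show k = k % P + (k / P) * P by rw [add_comm, mul_comm]; exact (Int.mul_ediv_add_emod k P).symm]
  rw [per_int h]



lemma root_sum {P : ℕ} (hP : 0 < P) {ξ : ℂ} (hξ : IsPrimitiveRoot ξ P) (m : ℤ) :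
    ∑ t ∈ range P, ξ ^ ((t : ℤ) * m) = if (P:ℤ) ∣ m then (P:ℂ) else 0 := by
  have key : ∀ t : ℕ, ξ ^ ((t:ℤ) * m) = (ξ ^ m) ^ t := by
    intro t; rw [mul_comm, zpow_mul]; norm_cast
  simp only [key]
  by_cases hd : (P:ℤ) ∣ m
  · have : ξ ^ m = 1 := (hξ.zpow_eq_one_iff_dvd m).mpr hd
    simp [this, hd]
  · have h1 : ξ ^ m ≠ 1 := fun h => hd ((hξ.zpow_eq_one_iff_dvd m).mp h)
    rw [geom_sum_eq h1]
    have : (ξ ^ m) ^ P = 1 := by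
      rw [← zpow_natCast, ← zpow_mul, mul_comm, zpow_mul]
      norm_cast
      rw [hξ.pow_eq_one, one_zpow]
    simp [hd, this]

lemma dft {P : ℕ} (hP : 0 < P) (f : ℤ → ℂ) (hf : ∀ k, f (k + P) = f k) :
    ∃ b : ℕ → ℂ, ∀ k : ℤ, f k =
      ∑ t ∈ range P, b t * Complex.exp (2 * Real.pi * I / P) ^ ((t : ℤ) * k) := by
  set ξ := Complex.exp (2 * Real.pi * I / P) with hξdef
  have hξ : IsPrimitiveRoot ξ P := Complex.isPrimitiveRoot_exp P hP.ne'
  have hne : ξ ≠ 0 := hξ.ne_zero hP.ne'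
  refine ⟨fun t => (P : ℂ)⁻¹ * ∑ s ∈ range P, f s * ξ ^ (-((t:ℤ) * s)), fun k => ?_⟩
  have swap : ∑ t ∈ range P, ((P : ℂ)⁻¹ * ∑ s ∈ range P, f s * ξ ^ (-((t:ℤ) * s))) * ξ ^ ((t:ℤ)*k)
      = (P:ℂ)⁻¹ * ∑ s ∈ range P, f s * ∑ t ∈ range P, ξ ^ ((t:ℤ) * (k - s)) := by
    have step1 : ∀ t ∈ range P,
        ((P : ℂ)⁻¹ * ∑ s ∈ range P, f s * ξ ^ (-((t:ℤ) * s))) * ξ ^ ((t:ℤ)*k)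
        = ∑ s ∈ range P, (P:ℂ)⁻¹ * (f s * ξ ^ ((t:ℤ) * (k - s))) := by
      intro t _
      rw [Finset.mul_sum, Finset.sum_mul]
      congr 1; ext s
      have : ((t:ℤ) * (k - s)) = (-((t:ℤ)*s)) + (t:ℤ)*k := by ring
      rw [this, zpow_add₀ hne]
      ring
    rw [Finset.sum_congr rfl step1, Finset.sum_comm, Finset.mul_sum]
    congr 1; ext s
    rw [Finset.mul_sum]
    simp [Finset.mul_sum]
  rw [swap]
  have inner : ∀ s ∈ range P, f s * (∑ t ∈ range P, ξ ^ ((t:ℤ) * (k - s)))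
      = if (s:ℤ) = k % P then f s * P else 0 := by
    intro s hs
    rw [root_sum hP hξ]
    have hiff : ((P:ℤ) ∣ k - s) ↔ ((s:ℤ) = k % P) := by
      constructor
      · intro ⟨c, hc⟩
        have : k = s + c * P := by linarith [hc]
        rw [this, Int.add_mul_emod_self_right]
        rw [Int.emod_eq_of_lt (by positivity) (by exact_mod_cast mem_range.mp hs)]
      · intro h
        exact ⟨k / P, by rw [h, Int.emod_def]; ring⟩
    by_cases hc : (P:ℤ) ∣ k - s
    · rw [if_pos hc, if_pos (hiff.mp hc)]
    · rw [if_neg hc, if_neg (fun h => hc (hiff.mpr h)), mul_zero]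
  rw [Finset.sum_congr rfl inner]
  have hkP : k % P = ((k % P).toNat : ℤ) := (Int.toNat_of_nonneg (Int.emod_nonneg k (by positivity))).symm
  have hlt : (k % P).toNat < P := by
    have := Int.emod_lt_of_pos k (b := P) (by positivity)
    omega
  have hcond : ∀ x : ℕ, ((x:ℤ) = k % P) ↔ (x = (k % P).toNat) := by intro x; omega
  simp only [hcond]
  rw [Finset.sum_ite_eq' (range P) ((k % P).toNat) (fun s => f s * P)]
  rw [if_pos (mem_range.mpr hlt)]
  rw [← hkP, ← per_mod hf k]
  have hPne : (P:ℂ) ≠ 0 := Nat.cast_ne_zero.mpr hP.ne'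
  field_simp


noncomputable def Ap (i : ℕ) : Polynomial ℂ :=
  ∏ l ∈ range i, (Polynomial.X + Polynomial.C ((l:ℂ)+1))

lemma Ap_monic (i : ℕ) : (Ap i).Monic :=
  Polynomial.monic_prod_of_monic _ _ (fun l _ => Polynomial.monic_X_add_C _)

lemma Ap_natDegree (i : ℕ) : (Ap i).natDegree = i := by
  rw [Ap, Polynomial.natDegree_prod]
  · have : ∑ l ∈ range i, (Polynomial.X + Polynomial.C ((l:ℂ) + 1)).natDegree
        = ∑ l ∈ range i, 1 := Finset.sum_congr rfl (fun l _ => Polynomial.natDegree_X_add_C _)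
    rw [this]; simp
  · intro l _; exact (Polynomial.monic_X_add_C _).ne_zero

lemma Ap_eval_succ (i : ℕ) (x : ℂ) :
    (Ap (i+1)).eval x = (x + ((i:ℂ)+1)) * (Ap i).eval x := by
  rw [Ap, Ap, prod_range_succ, Polynomial.eval_mul]
  simp only [Polynomial.eval_add, Polynomial.eval_X, Polynomial.eval_C]
  ring

lemma Ap_eval_sub_one (i : ℕ) (x : ℂ) :
    (Ap (i+1)).eval (x - 1) = x * (Ap i).eval x := by
  rw [Ap, Ap]
  simp only [Polynomial.eval_prod, Polynomial.eval_add, Polynomial.eval_X, Polynomial.eval_C]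
  have this1 : ∀ l ∈ range (i+1), (x - 1 + ((l:ℂ) + 1)) = x + (l:ℂ) := by intro l _; ring
  rw [prod_congr rfl this1, prod_range_succ']
  simp only [Nat.cast_add, Nat.cast_one, Nat.cast_zero, add_zero]
  ring

lemma Ap_eval_zero (i : ℕ) : (Ap i).eval 0 = (Nat.factorial i : ℂ) := by
  induction i with
  | zero => simp [Ap, Nat.factorial]
  | succ i ih => rw [Ap_eval_succ, ih, Nat.factorial_succ]; push_cast; ring

lemma Ap_diff (i : ℕ) (x : ℂ) :
    (Ap (i+1)).eval x - (Ap (i+1)).eval (x - 1) = ((i:ℂ)+1) * (Ap i).eval x := by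
  rw [Ap_eval_succ, Ap_eval_sub_one]; ring

noncomputable def Sps (ζ : ℂ) (i : ℕ) : PowerSeries ℂ :=
  PowerSeries.mk (fun k => (Ap i).eval (k:ℂ) * ζ^k)

lemma one_sub_mul_mk (ζ : ℂ) (f : ℕ → ℂ) :
    (1 - PowerSeries.C ζ * PowerSeries.X) * PowerSeries.mk f
    = PowerSeries.mk (fun k => match k with
        | 0 => f 0
        | k+1 => f (k+1) - ζ * f k) := by
  ext n
  cases n with
  | zero => simp [sub_mul, mul_assoc]
  | succ n =>
      simp [sub_mul, mul_assoc, PowerSeries.coeff_succ_X_mul, PowerSeries.coeff_mk]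

lemma sps_base (ζ : ℂ) : (1 - PowerSeries.C ζ * PowerSeries.X) * Sps ζ 0 = 1 := by
  rw [Sps, one_sub_mul_mk]
  ext n
  cases n with
  | zero => simp [Ap]
  | succ n => simp [Ap, pow_succ]; ring

lemma sps_step (ζ : ℂ) (i : ℕ) :
    (1 - PowerSeries.C ζ * PowerSeries.X) * Sps ζ (i+1)
    = PowerSeries.C ((i:ℂ)+1) * Sps ζ i := by
  rw [Sps, one_sub_mul_mk]
  ext n
  cases n with
  | zero =>
      simp [Sps, Ap_eval_zero, Nat.factorial_succ, PowerSeries.coeff_C_mul]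
  | succ n =>
      simp only [PowerSeries.coeff_mk, PowerSeries.coeff_C_mul, Sps]
      have hx := Ap_diff i ((n:ℂ)+1)
      have h1 : ((n:ℂ) + 1) - 1 = (n:ℂ) := by ring
      rw [h1] at hx
      have cast1 : ((n+1 : ℕ) : ℂ) = (n:ℂ)+1 := by push_cast; ring
      rw [cast1, pow_succ]
      linear_combination (ζ^n * ζ) * hx

lemma sps_main (ζ : ℂ) (i : ℕ) :
    (1 - PowerSeries.C ζ * PowerSeries.X)^(i+1) * Sps ζ i
    = PowerSeries.C (Nat.factorial i : ℂ) := by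
  induction i with
  | zero => rw [pow_one, sps_base]; simp [Nat.factorial]
  | succ i ih =>
      rw [pow_succ, mul_assoc, sps_step, ← mul_assoc, mul_comm _ (PowerSeries.C ((i:ℂ)+1)),
        mul_assoc, ih, ← map_mul, Nat.factorial_succ]
      push_cast; ring_nf



lemma exprA : ∀ (d : ℕ) (p : Polynomial ℂ), p.natDegree ≤ d →
    ∃ γ : ℕ → ℂ, p = ∑ i ∈ range (d+1), Polynomial.C (γ i) * Ap i := by
  intro d
  induction d with
  | zero =>
      intro p hp
      refine ⟨fun _ => p.coeff 0, ?_⟩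
      rw [Polynomial.eq_C_of_natDegree_le_zero hp]
      simp [Ap]
  | succ d ih =>
      intro p hp
      set u := p.coeff (d+1) with hu
      set r := p - Polynomial.C u * Ap (d+1) with hr
      have hrd : r.natDegree ≤ d := by
        rw [Polynomial.natDegree_le_iff_coeff_eq_zero]
        intro m hm
        rw [hr, Polynomial.coeff_sub, Polynomial.coeff_C_mul]
        rcases eq_or_lt_of_le (Nat.succ_le_of_lt hm) with h | h
        · rw [← h]
          have := (Ap_monic (d+1)).coeff_natDegree
          rw [Ap_natDegree] at this
          rw [this, mul_one, hu, sub_self]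
        · have h1 : p.coeff m = 0 := Polynomial.coeff_eq_zero_of_natDegree_lt (lt_of_le_of_lt hp h)
          have h2 : (Ap (d+1)).coeff m = 0 := by
            apply Polynomial.coeff_eq_zero_of_natDegree_lt
            rw [Ap_natDegree]; exact h
          rw [h1, h2, mul_zero, sub_zero]
      obtain ⟨γ', hγ'⟩ := ih r hrd
      refine ⟨fun i => if i = d+1 then u else γ' i, ?_⟩
      rw [Finset.sum_range_succ]
      have : ∀ i ∈ range (d+1),
          Polynomial.C (if i = d+1 then u else γ' i) * Ap i = Polynomial.C (γ' i) * Ap i := by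
        intro i hi
        have := mem_range.mp hi
        rw [if_neg (by omega : ¬ i = d+1)]
      rw [Finset.sum_congr rfl this, ← hγ']
      have h2 : Polynomial.C ((fun i => if i = d + 1 then u else γ' i) (d+1)) = Polynomial.C u := by
        simp
      rw [h2, hr]
      ring

end helpers

section main
open Complex Finset

/-- Lemma `basiclemmarefined` (b): if every pole of order at
least `j+1` of the generating function `num/den` (in lowest terms) of a
quasi-polynomial `q` is an n-th root of unity, then `n` is a period of the
coefficient function `c_j`. -/
theorem poles_give_period (D j n : ℕ) (hn : 0 < n) (hj : j ≤ D)
    (c : ℕ → ℤ → ℂ)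
    (hper : ∀ i, ∃ p : ℕ, 0 < p ∧ ∀ k : ℤ, c i (k + p) = c i k)
    (q : ℤ → ℂ)
    (hq : ∀ k : ℤ, q k = ∑ i ∈ Finset.range (D + 1), c i k * (k : ℂ) ^ i)
    (num den : Polynomial ℂ) (hcop : IsCoprime num den) (hden : den ≠ 0)
    (hprop : num.degree < den.degree)
    (hr : (den : PowerSeries ℂ) * PowerSeries.mk (fun k : ℕ => q k) =
      (num : PowerSeries ℂ))
    (hpoles : ∀ ω : ℂ, den.IsRoot ω → j + 1 ≤ den.rootMultiplicity ω →
      ω ^ n = 1) :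
    ∀ k : ℤ, c j (k + n) = c j k := by
  classical
  choose p hppos hpc using hper
  set P := n * ∏ l ∈ Finset.range (D+1), p l with hPdef
  have hPpos : 0 < P := Nat.mul_pos hn (Finset.prod_pos (fun l _ => hppos l))
  have hcP : ∀ l, l < D + 1 → ∀ k : ℤ, c l (k + P) = c l k := by
    intro l hl k
    obtain ⟨m, hm⟩ : p l ∣ P :=
      Dvd.dvd.mul_left (Finset.dvd_prod_of_mem p (Finset.mem_range.mpr hl)) n
    have h2 : (P : ℤ) = (m : ℤ) * (p l : ℤ) := by rw [hm]; push_cast; ring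
    rw [h2]
    exact per_int (hpc l) m k
  set ξ := Complex.exp (2 * Real.pi * Complex.I / P) with hξdef
  have hξ : IsPrimitiveRoot ξ P := Complex.isPrimitiveRoot_exp P hPpos.ne'
  have hξne : ξ ≠ 0 := hξ.ne_zero hPpos.ne'
  -- basis expansion of X^l
  have hγex : ∀ l : ℕ, ∃ γ : ℕ → ℂ,
      (Polynomial.X : Polynomial ℂ)^(min l D)
        = ∑ i ∈ Finset.range (D+1), Polynomial.C (γ i) * Ap i := by
    intro l
    apply exprA
    simp [Polynomial.natDegree_X_pow]
  choose γ hγ using hγex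
  set e : ℕ → ℤ → ℂ := fun i k => ∑ l ∈ Finset.range (D+1), c l k * γ l i with hedef
  -- pointwise polynomial identity
  have hpoly : ∀ k : ℤ, ∑ l ∈ Finset.range (D+1), Polynomial.C (c l k) * Polynomial.X ^ l
      = ∑ i ∈ Finset.range (D+1), Polynomial.C (e i k) * Ap i := by
    intro k
    have h1 : ∀ l ∈ Finset.range (D+1),
        Polynomial.C (c l k) * Polynomial.X ^ l
        = ∑ i ∈ Finset.range (D+1), Polynomial.C (c l k * γ l i) * Ap i := by
      intro l hl
      have hmin : (Polynomial.X : Polynomial ℂ) ^ l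
          = (Polynomial.X : Polynomial ℂ) ^ (min l D) := by
        have := Finset.mem_range.mp hl
        rw [min_eq_left (by omega : l ≤ D)]
      rw [hmin, hγ l, Finset.mul_sum]
      refine Finset.sum_congr rfl (fun i _ => ?_)
      rw [map_mul]; ring
    rw [Finset.sum_congr rfl h1, Finset.sum_comm]
    refine Finset.sum_congr rfl (fun i _ => ?_)
    rw [hedef]
    simp only
    rw [← Finset.sum_mul, ← map_sum]
  -- extraction of c_j
  have hcj : ∀ k : ℤ, c j k = ∑ i ∈ Finset.range (D+1), e i k * (Ap i).coeff j := by
    intro k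
    have h0 := congrArg (fun pq => Polynomial.coeff pq j) (hpoly k)
    simp only [Polynomial.finset_sum_coeff, Polynomial.coeff_C_mul,
      Polynomial.coeff_X_pow] at h0
    rw [← h0]
    have h1 : ∀ l ∈ Finset.range (D+1),
        (c l k * if j = l then (1:ℂ) else 0) = if j = l then c l k else 0 :=
      fun l _ => by rw [mul_ite, mul_one, mul_zero]
    rw [Finset.sum_congr rfl h1,
      Finset.sum_ite_eq (Finset.range (D+1)) j (fun l => c l k),
      if_pos (Finset.mem_range.mpr (by omega))]
  -- q in terms of e and Ap
  have hq2 : ∀ k : ℤ, q k = ∑ i ∈ Finset.range (D+1), e i k * (Ap i).eval (k:ℂ) := by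
    intro k
    have h0 := congrArg (Polynomial.eval (k:ℂ)) (hpoly k)
    simp only [Polynomial.eval_finset_sum, Polynomial.eval_mul, Polynomial.eval_C,
      Polynomial.eval_pow, Polynomial.eval_X] at h0
    rw [hq k, h0]
  have heper : ∀ i, ∀ k : ℤ, e i (k + P) = e i k := by
    intro i k
    rw [hedef]; simp only
    exact Finset.sum_congr rfl (fun l hl => by rw [hcP l (Finset.mem_range.mp hl)])
  choose β hβ using fun i => dft hPpos (e i) (heper i)
  rw [← hξdef] at hβ
  have hzpow : ∀ (t : ℕ) (k : ℕ), ξ ^ ((t:ℤ) * (k:ℤ)) = (ξ^t)^k := by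
    intro t k
    rw [zpow_mul]
    norm_cast
  -- power series identity
  have Hmk : PowerSeries.mk (fun k : ℕ => q k)
      = ∑ t ∈ Finset.range P, ∑ i ∈ Finset.range (D+1),
          PowerSeries.C (β i t) * Sps (ξ^t) i := by
    ext k
    simp only [PowerSeries.coeff_mk, map_sum, PowerSeries.coeff_C_mul, Sps]
    rw [hq2 (k:ℤ), Finset.sum_comm]
    refine Finset.sum_congr rfl (fun i _ => ?_)
    rw [hβ i (k:ℤ), Finset.sum_mul]
    refine Finset.sum_congr rfl (fun t _ => ?_)
    rw [hzpow]
    push_cast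
    ring
  set F : ℕ → Polynomial ℂ := fun t => 1 - Polynomial.C (ξ^t) * Polynomial.X with hF
  set Mp : Polynomial ℂ := ∏ t ∈ Finset.range P, F t ^ (D+1) with hMp
  set term : ℕ → ℕ → Polynomial ℂ := fun t i =>
      Polynomial.C (β i t * (Nat.factorial i : ℂ)) *
        ((∏ t' ∈ (Finset.range P).erase t, F t' ^ (D+1)) * F t ^ (D - i)) with hterm
  set Np : Polynomial ℂ := ∑ t ∈ Finset.range P, ∑ i ∈ Finset.range (D+1), term t i with hNp
  have hcoeF : ∀ t : ℕ, ((F t : Polynomial ℂ) : PowerSeries ℂ)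
      = 1 - PowerSeries.C (ξ^t) * PowerSeries.X := by
    intro t
    rw [hF]
    simp only
    rw [← Polynomial.coeToPowerSeries.ringHom_apply, map_sub, map_mul, map_one,
      Polynomial.coeToPowerSeries.ringHom_apply, Polynomial.coeToPowerSeries.ringHom_apply,
      Polynomial.coe_C, Polynomial.coe_X]
  have key0 : ∀ t ∈ Finset.range P, ∀ i ∈ Finset.range (D+1),
      ((Mp : Polynomial ℂ) : PowerSeries ℂ) * (PowerSeries.C (β i t) * Sps (ξ^t) i)
      = ((term t i : Polynomial ℂ) : PowerSeries ℂ) := by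
    intro t ht i hi
    have hiD : i ≤ D := by have := Finset.mem_range.mp hi; omega
    have hMsplit : Mp = F t ^ (D - i) * (F t ^ (i+1) * ∏ t' ∈ (Finset.range P).erase t, F t' ^ (D+1)) := by
      rw [hMp, ← Finset.mul_prod_erase _ _ ht, ← mul_assoc, ← pow_add]
      congr 2
      omega
    rw [hMsplit, hterm]
    simp only
    push_cast
    rw [hcoeF]
    rw [show PowerSeries.C (β i t * (Nat.factorial i : ℂ))
        = PowerSeries.C (β i t) * PowerSeries.C (Nat.factorial i : ℂ) from map_mul _ _ _]
    have hsps := sps_main (ξ^t) i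
    linear_combination ((1 - PowerSeries.C (ξ^t) * PowerSeries.X)^(D-i)
      * ((∏ t' ∈ (Finset.range P).erase t, F t' ^ (D+1) : Polynomial ℂ) : PowerSeries ℂ)
      * PowerSeries.C (β i t)) * hsps
  have coeRH : ∀ pq : Polynomial ℂ, (pq : PowerSeries ℂ)
      = Polynomial.coeToPowerSeries.ringHom pq := fun _ => rfl
  have key : ((Mp : Polynomial ℂ) : PowerSeries ℂ) * PowerSeries.mk (fun k : ℕ => q k)
      = ((Np : Polynomial ℂ) : PowerSeries ℂ) := by
    rw [Hmk, Finset.mul_sum]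
    have hNps : ((Np : Polynomial ℂ) : PowerSeries ℂ)
        = ∑ t ∈ Finset.range P, ∑ i ∈ Finset.range (D+1),
            ((term t i : Polynomial ℂ) : PowerSeries ℂ) := by
      rw [hNp, coeRH, map_sum]
      exact Finset.sum_congr rfl (fun t _ => by rw [map_sum]; rfl)
    rw [hNps]
    refine Finset.sum_congr rfl (fun t ht => ?_)
    rw [Finset.mul_sum]
    exact Finset.sum_congr rfl (fun i hi => key0 t ht i hi)
  have hDN : den * Np = Mp * num := by
    apply Polynomial.coe_inj.mp
    rw [coeRH (den * Np), coeRH (Mp * num), map_mul, map_mul]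
    simp only [← coeRH]
    rw [← key, ← hr]
    ring
  -- the crucial claim: contributing roots are n-th roots of unity
  have KEY : ∀ s ∈ Finset.range P, ∀ i ∈ Finset.range (D+1),
      j ≤ i → β i s ≠ 0 → (ξ^s)^n = 1 := by
    intro s hs i hi hji hβne
    set d := Nat.findGreatest (fun i' => β i' s ≠ 0) D with hd
    have hiD : i ≤ D := by have := Finset.mem_range.mp hi; omega
    have hdD : d ≤ D := Nat.findGreatest_le D
    have hdge : i ≤ d := by
      have h := Nat.le_findGreatest (P := fun i' => β i' s ≠ 0) hiD hβne
      rw [← hd] at h; exact h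
    have hdne : β d s ≠ 0 := by
      have h := Nat.findGreatest_spec (P := fun i' => β i' s ≠ 0) hiD hβne
      rw [← hd] at h; exact h
    have hdmax : ∀ i', d < i' → i' ≤ D → β i' s = 0 := by
      intro i' h1 h2
      by_contra hne
      rw [hd] at h1
      exact Nat.findGreatest_is_greatest (P := fun i' => β i' s ≠ 0) h1 h2 hne
    set ζ := ξ ^ s with hζ
    have hζne : ζ ≠ 0 := pow_ne_zero _ hξne
    set ω := ζ⁻¹ with hω
    have hωζ : ζ * ω = 1 := mul_inv_cancel₀ hζne
    have hCζω : Polynomial.C ζ * Polynomial.C ω = 1 := by rw [← map_mul, hωζ, map_one]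
    have hlin : F s = -Polynomial.C ζ * (Polynomial.X - Polynomial.C ω) := by
      rw [hF]
      simp only
      rw [hζ]
      linear_combination -hCζω
    have hlindvd : (Polynomial.X - Polynomial.C ω) ∣ F s := by
      rw [hlin]; exact dvd_mul_left _ _
    have hFeval : ∀ t' ∈ (Finset.range P).erase s, Polynomial.eval ω (F t') ≠ 0 := by
      intro t' ht' h0
      have ht'P : t' < P := Finset.mem_range.mp (Finset.mem_of_mem_erase ht')
      have ht's : t' ≠ s := Finset.ne_of_mem_erase ht'
      rw [hF] at h0
      simp only [Polynomial.eval_sub, Polynomial.eval_one, Polynomial.eval_mul,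
        Polynomial.eval_C, Polynomial.eval_X] at h0
      have h6 : ξ ^ t' * ω = 1 := by linear_combination -h0
      have hξt' : ξ ^ t' = ζ := by
        have h5 := eq_inv_of_mul_eq_one_left h6
        rw [hω, inv_inv] at h5
        exact h5
      exact ht's (hξ.pow_inj ht'P (Finset.mem_range.mp hs) hξt')
    -- non-divisibility of Np
    have hndvd : ¬ ((Polynomial.X - Polynomial.C ω)^(D - d + 1) ∣ Np) := by
      intro hdvd
      have hNp2 : Np = ∑ pq ∈ (Finset.range P ×ˢ Finset.range (D+1)), term pq.1 pq.2 := by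
        rw [hNp, Finset.sum_product]
      have hmem : (s, d) ∈ (Finset.range P ×ˢ Finset.range (D+1)) :=
        Finset.mem_product.mpr ⟨hs, Finset.mem_range.mpr (by omega)⟩
      have hsplit : Np = term s d
          + ∑ pq ∈ ((Finset.range P ×ˢ Finset.range (D+1)).erase (s, d)), term pq.1 pq.2 := by
        rw [hNp2]
        simpa using (Finset.add_sum_erase _ (fun pq => term pq.1 pq.2) hmem).symm
      have hterm_dvd : ∀ pq ∈ ((Finset.range P ×ˢ Finset.range (D+1)).erase (s, d)),
          (Polynomial.X - Polynomial.C ω)^(D - d + 1) ∣ term pq.1 pq.2 := by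
        intro pq hpq
        obtain ⟨hne, hmem2⟩ := Finset.mem_erase.mp hpq
        obtain ⟨ht, hi2⟩ := Finset.mem_product.mp hmem2
        obtain ⟨t, i'⟩ := pq
        simp only at hne ht hi2 ⊢
        have hi'D : i' ≤ D := by have := Finset.mem_range.mp hi2; omega
        rcases eq_or_ne t s with rfl | hts
        · have hine : i' ≠ d := fun h => hne (by rw [h])
          rcases lt_or_gt_of_ne hine with hlt | hgt
          · have h1 : (Polynomial.X - Polynomial.C ω)^(D-d+1) ∣ F t ^ (D - i') :=
              dvd_trans (pow_dvd_pow _ (by omega)) (pow_dvd_pow_of_dvd hlindvd _)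
            exact Dvd.dvd.mul_left (Dvd.dvd.mul_left h1 _) _
          · have hz : β i' t = 0 := hdmax i' hgt hi'D
            rw [hterm]
            simp only
            rw [hz]
            simp
        · have hsmem : s ∈ (Finset.range P).erase t := Finset.mem_erase.mpr ⟨Ne.symm hts, hs⟩
          have h1 : F s ^ (D+1) ∣ ∏ t' ∈ (Finset.range P).erase t, F t' ^ (D+1) :=
            Finset.dvd_prod_of_mem _ hsmem
          have h2 : (Polynomial.X - Polynomial.C ω)^(D-d+1) ∣ F s ^(D+1) :=
            dvd_trans (pow_dvd_pow _ (by omega)) (pow_dvd_pow_of_dvd hlindvd _)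
          have h3 : (∏ t' ∈ (Finset.range P).erase t, F t' ^ (D+1)) ∣ term t i' := by
            rw [hterm]
            simp only
            exact Dvd.dvd.mul_left (dvd_mul_right _ _) _
          exact (h2.trans h1).trans h3
      have hrest : (Polynomial.X - Polynomial.C ω)^(D - d + 1)
          ∣ ∑ pq ∈ ((Finset.range P ×ˢ Finset.range (D+1)).erase (s, d)), term pq.1 pq.2 :=
        Finset.dvd_sum hterm_dvd
      have hT : (Polynomial.X - Polynomial.C ω)^(D - d + 1) ∣ term s d := by
        have h4 := dvd_sub hdvd hrest
        rw [hsplit] at h4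
        simpa using h4
      -- rewrite term s d and cancel
      have hTeq : term s d = (Polynomial.X - Polynomial.C ω)^(D-d)
          * (Polynomial.C (β d s * (Nat.factorial d : ℂ))
             * (∏ t' ∈ (Finset.range P).erase s, F t' ^ (D+1)) * (-Polynomial.C ζ)^(D-d)) := by
        rw [hterm]
        simp only
        rw [hlin, mul_pow]
        ring
      rw [hTeq, pow_succ] at hT
      have hcancel := (mul_dvd_mul_iff_left
        (pow_ne_zero (D-d) (Polynomial.X_sub_C_ne_zero ω))).mp hT
      have he : Polynomial.eval ω (Polynomial.C (β d s * (Nat.factorial d : ℂ))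
          * (∏ t' ∈ (Finset.range P).erase s, F t' ^ (D+1)) * (-Polynomial.C ζ)^(D-d)) = 0 :=
        Polynomial.dvd_iff_isRoot.mp hcancel
      simp only [Polynomial.eval_mul, Polynomial.eval_pow, Polynomial.eval_neg,
        Polynomial.eval_C, Polynomial.eval_prod] at he
      have f1 : β d s * (Nat.factorial d : ℂ) ≠ 0 :=
        mul_ne_zero hdne (Nat.cast_ne_zero.mpr (Nat.factorial_ne_zero d))
      have f2 : (∏ t' ∈ (Finset.range P).erase s, Polynomial.eval ω (F t') ^ (D+1)) ≠ 0 :=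
        Finset.prod_ne_zero_iff.mpr (fun t' ht' => pow_ne_zero _ (hFeval t' ht'))
      have f3 : (-ζ)^(D-d) ≠ 0 := pow_ne_zero _ (neg_ne_zero.mpr hζne)
      exact (mul_ne_zero (mul_ne_zero f1 f2) f3) he
    have hNp0 : Np ≠ 0 := fun h => hndvd (by rw [h]; exact dvd_zero _)
    have hdn0 : den * Np ≠ 0 := mul_ne_zero hden hNp0
    have hMnum0 : Mp * num ≠ 0 := by rw [← hDN]; exact hdn0
    have hge : D + 1 ≤ (Mp * num).rootMultiplicity ω := by
      rw [Polynomial.le_rootMultiplicity_iff hMnum0]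
      have h1 : (Polynomial.X - Polynomial.C ω)^(D+1) ∣ F s^(D+1) :=
        pow_dvd_pow_of_dvd hlindvd _
      have h2 : F s^(D+1) ∣ Mp := by rw [hMp]; exact Finset.dvd_prod_of_mem _ hs
      exact (h1.trans h2).trans (dvd_mul_right _ _)
    have hNle : Np.rootMultiplicity ω ≤ D - d := by
      by_contra hlt
      push_neg at hlt
      exact hndvd ((pow_dvd_pow _ (by omega)).trans (Polynomial.pow_rootMultiplicity_dvd Np ω))
    have hmul : (den * Np).rootMultiplicity ω
        = den.rootMultiplicity ω + Np.rootMultiplicity ω :=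
      Polynomial.rootMultiplicity_mul hdn0
    have hrmden : j + 1 ≤ den.rootMultiplicity ω := by
      rw [hDN] at hmul
      omega
    have hroot : den.IsRoot ω := by
      have hpos : 0 < den.rootMultiplicity ω := by omega
      exact (Polynomial.rootMultiplicity_pos hden).mp hpos
    have hωn := hpoles ω hroot hrmden
    rw [hω, inv_pow] at hωn
    exact inv_eq_one.mp hωn
  -- conclusion
  intro k
  rw [hcj (k + n), hcj k]
  refine Finset.sum_congr rfl (fun i hi => ?_)
  rcases lt_or_ge i j with hij | hij
  · have hz : (Ap i).coeff j = 0 :=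
      Polynomial.coeff_eq_zero_of_natDegree_lt (by rw [Ap_natDegree]; omega)
    rw [hz, mul_zero, mul_zero]
  · have he : e i (k + n) = e i k := by
      rw [hβ i (k + (n:ℤ)), hβ i k]
      refine Finset.sum_congr rfl (fun t ht => ?_)
      rcases eq_or_ne (β i t) 0 with h0 | h0
      · rw [h0, zero_mul, zero_mul]
      · have hξtn : (ξ^t)^n = 1 := KEY t ht i hi hij h0
        congr 1
        have hsplit2 : (t:ℤ) * (k + n) = (t:ℤ)*k + (t:ℤ)*(n:ℤ) := by ring
        rw [hsplit2, zpow_add₀ hξne]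
        have h2 : ξ ^ ((t:ℤ)*(n:ℤ)) = (ξ^t)^n := by rw [zpow_mul]; norm_cast
        rw [h2, hξtn, mul_one]
    rw [he]

end main
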